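/- Define Φ(y) = ((−1)^{N/2}/(2 y^2 i)) [ (y + i/2) ∏_{j=1}^{2N}(y − i s_j) − (y − i/2) ∏_{j=1}^{2N}(y + i s_j) ]. Then, with x = y^2, x·Φ = (−1)^{N/2} [ Σ_{j=0}^{N−1} (−1)^j ((1/2) ς_{2j} − ς_{2j+1}) x^{N−j} + (1/2) ς_{2N} ], a polynomial of degree at most N in x. -/

import Mathlib

open Complex Finset

lemma sum_range_pair {M : Type*} [AddCommMonoid M] (g : ℕ → M) (n : ℕ) :
    ∑ l ∈ Finset.range (2 * n + 1), g l
      = (∑ j ∈ Finset.range n, (g (2 * j) + g (2 * j + 1))) + g (2 * n) := by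
  induction n with
  | zero => simp
  | succ n ih =>
    rw [show 2 * (n + 1) + 1 = (2 * n + 1) + 1 + 1 by ring, Finset.sum_range_succ,
      Finset.sum_range_succ, ih, Finset.sum_range_succ,
      show 2 * n + 1 + 1 = 2 * (n + 1) by ring]
    abel

lemma prod_expand (n : ℕ) (s : Fin n → ℂ) (y c : ℂ) :
    ∏ j, (y + c * s j)
      = ∑ l ∈ Finset.range (n + 1),
          c ^ l * (∑ t ∈ Finset.powersetCard l (Finset.univ : Finset (Fin n)),
            ∏ i ∈ t, s i) * y ^ (n - l) := by
  simp_rw [show ∀ j, y + c * s j = c * s j + y from fun j => add_comm _ _]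
  rw [Finset.prod_add, Finset.sum_powerset]
  rw [Finset.card_univ, Fintype.card_fin]
  refine Finset.sum_congr rfl fun l _ => ?_
  rw [Finset.mul_sum, Finset.sum_mul]
  refine Finset.sum_congr rfl fun t ht => ?_
  obtain ⟨-, hcard⟩ := Finset.mem_powersetCard.mp ht
  rw [Finset.prod_const, Finset.prod_mul_distrib, Finset.prod_const,
    Finset.card_sdiff_of_subset (Finset.subset_univ t), Finset.card_univ, Fintype.card_fin, hcard]

/-- With `Φ(y) = ((-1)^{N/2}/(2y²i))[(y+i/2)∏(y-is_j) − (y-i/2)∏(y+is_j)]` and `x = y²`: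
`x·Φ = (-1)^{N/2}[Σ_{j<N} (-1)^j ((1/2)ς_{2j} − ς_{2j+1}) x^{N-j} + (1/2)ς_{2N}]`. -/
theorem xPhi_polynomial_in_x (N : ℕ) (hN : 0 < N) (hNe : Even N)
    (s : Fin (2 * N) → ℂ) (y : ℂ) (hy : y ≠ 0) :
    let ς : ℕ → ℂ := fun l =>
      ∑ t ∈ Finset.powersetCard l (Finset.univ : Finset (Fin (2 * N))), ∏ i ∈ t, s i
    (y ^ 2) * (((-1 : ℂ) ^ (N / 2) / (2 * y ^ 2 * Complex.I)) *
        ((y + Complex.I / 2) * ∏ j, (y - Complex.I * s j) -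
          (y - Complex.I / 2) * ∏ j, (y + Complex.I * s j))) =
      (-1 : ℂ) ^ (N / 2) *
        ((∑ j ∈ Finset.range N, (-1) ^ j *
            ((1 / 2 : ℂ) * ς (2 * j) - ς (2 * j + 1)) * (y ^ 2) ^ (N - j)) +
          (1 / 2 : ℂ) * ς (2 * N)) := by
  intro ς
  have hPm : ∏ j, (y - Complex.I * s j)
      = ∑ l ∈ Finset.range (2 * N + 1), (-Complex.I) ^ l * ς l * y ^ (2 * N - l) := by
    simpa [sub_eq_add_neg, neg_mul] using prod_expand (2 * N) s y (-Complex.I)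
  have hPp : ∏ j, (y + Complex.I * s j)
      = ∑ l ∈ Finset.range (2 * N + 1), Complex.I ^ l * ς l * y ^ (2 * N - l) :=
    prod_expand (2 * N) s y Complex.I
  set g : ℕ → ℂ := fun l =>
    ((y + Complex.I / 2) * (-Complex.I) ^ l - (y - Complex.I / 2) * Complex.I ^ l)
      * ς l * y ^ (2 * N - l) with hg
  have hS : (y + Complex.I / 2) * ∏ j, (y - Complex.I * s j) -
      (y - Complex.I / 2) * ∏ j, (y + Complex.I * s j)
      = ∑ l ∈ Finset.range (2 * N + 1), g l := by
    rw [hPm, hPp, Finset.mul_sum, Finset.mul_sum, ← Finset.sum_sub_distrib]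
    exact Finset.sum_congr rfl fun l _ => by rw [hg]; ring
  have key : ∑ l ∈ Finset.range (2 * N + 1), g l
      = 2 * Complex.I *
        ((∑ j ∈ Finset.range N, (-1) ^ j *
            ((1 / 2 : ℂ) * ς (2 * j) - ς (2 * j + 1)) * (y ^ 2) ^ (N - j)) +
          (1 / 2 : ℂ) * ς (2 * N)) := by
    rw [sum_range_pair g N]
    have hI2 : ∀ j : ℕ, (Complex.I) ^ (2 * j) = (-1 : ℂ) ^ j := by
      intro j; rw [pow_mul, Complex.I_sq]
    have hmI2 : ∀ j : ℕ, (-Complex.I) ^ (2 * j) = (-1 : ℂ) ^ j := by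
      intro j; rw [pow_mul]; norm_num [Complex.I_sq]
    have hlast : g (2 * N) = Complex.I * ς (2 * N) := by
      rw [hg]; simp only [hI2, hmI2, hNe.neg_one_pow, Nat.sub_self, pow_zero]; ring
    have hpair : ∀ j ∈ Finset.range N, g (2 * j) + g (2 * j + 1)
        = 2 * Complex.I * ((-1) ^ j *
            ((1 / 2 : ℂ) * ς (2 * j) - ς (2 * j + 1)) * (y ^ 2) ^ (N - j)) := by
      intro j hj
      have hjN : j < N := Finset.mem_range.mp hj
      have h1 : 2 * N - 2 * j = 2 * (N - j) := by omega
      have h4 : y ^ (2 * (N - j)) = (y ^ 2) ^ (N - j) := by rw [← pow_mul]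
      have h3 : y ^ (2 * N - (2 * j + 1)) * y = (y ^ 2) ^ (N - j) := by
        rw [← pow_succ, show 2 * N - (2 * j + 1) + 1 = 2 * (N - j) by omega, pow_mul]
      rw [hg]
      simp only [pow_succ, hI2, hmI2, h1, h4]
      linear_combination ((-1 : ℂ) ^ j * (-2) * Complex.I * ς (2 * j + 1)) * h3
    rw [Finset.sum_congr rfl hpair, hlast, ← Finset.mul_sum]
    ring
  rw [hS, key]
  have hne : (2 * y ^ 2 * Complex.I * 2 : ℂ) ≠ 0 :=
    mul_ne_zero (mul_ne_zero (mul_ne_zero two_ne_zero (pow_ne_zero 2 hy))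
      Complex.I_ne_zero) two_ne_zero
  field_simp
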